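/- Let q ≡ 7 (mod 8), and r ≡ 3 (mod 8), s ≡ 3 (mod 8) be primes with (q/r) = (q/s) = -1. Then there are no integers a, b₁, b₂ with b₁ coprime to r and b₂ coprime to q such that a + 1 = b₁² and a - 1 = 2qrs·b₂². -/
import Mathlib

/-- Let q ≡ 7 (mod 8), and r ≡ 3 (mod 8), s ≡ 3 (mod 8) be primes with
(q/r) = (q/s) = -1. Then there are no integers a, b₁, b₂ with b₁ coprime to r and b₂
coprime to q such that a + 1 = b₁² and a - 1 = 2qrs·b₂². -/
theorem stmt2 (q r s : ℕ) (hq : q.Prime) (hr : r.Prime) (hs : s.Prime)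
    (hq8 : q % 8 = 7) (hr8 : r % 8 = 3) (hs8 : s % 8 = 3)
    (h1 : @legendreSym r ⟨hr⟩ (q : ℤ) = -1) (h2 : @legendreSym s ⟨hs⟩ (q : ℤ) = -1) :
    ¬ ∃ a b₁ b₂ : ℤ, IsCoprime b₁ (r : ℤ) ∧ IsCoprime b₂ (q : ℤ) ∧
      a + 1 = b₁ ^ 2 ∧ a - 1 = 2 * q * r * s * b₂ ^ 2 := by
  rintro ⟨a, b₁, b₂, hc1, hc2, e1, e2⟩
  haveI : Fact r.Prime := ⟨hr⟩
  have key : (b₁ ^ 2 : ℤ) = 2 * q * r * s * b₂ ^ 2 + 2 := by linarith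
  have h := congrArg (Int.cast : ℤ → ZMod r) key
  push_cast at h
  rw [ZMod.natCast_self] at h
  ring_nf at h
  have hsq : IsSquare (2 : ZMod r) := ⟨b₁, by rw [← h]; ring⟩
  rw [ZMod.exists_sq_eq_two_iff (by omega : r ≠ 2)] at hsq
  omega
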